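/- Let R be a commutative ring and e an idempotent of the classical quotient ring Q_cl(R) such that R is arithmetical (its lattice of ideals is distributive). Then e ∈ R. -/

import Mathlib

/-- If R is arithmetical, then every idempotent of Q_cl(R) lies in R. -/
theorem idempotent_of_fractionRing_mem_of_arithmetical (R : Type*) [CommRing R]
    (harith : ∀ I J K : Ideal R, I ⊓ (J ⊔ K) = (I ⊓ J) ⊔ (I ⊓ K))
    (e : FractionRing R) (he : e * e = e) :
    ∃ r : R, algebraMap R (FractionRing R) r = e := by
  obtain ⟨⟨a, s⟩, rfl⟩ := IsLocalization.mk'_surjective (nonZeroDivisors R) e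
  have hinj : Function.Injective (algebraMap R (FractionRing R)) :=
    IsFractionRing.injective R (FractionRing R)
  -- From idempotency derive a * a = a * s
  have h1 : IsLocalization.mk' (FractionRing R) (a * a) (s * s) =
      IsLocalization.mk' (FractionRing R) a s := by
    rw [IsLocalization.mk'_mul]; exact he
  rw [IsLocalization.mk'_eq_iff_eq] at h1
  have h2 : (s : R) * (a * a) = (s * s : R) * a := hinj h1
  have key : a * a = a * s := by
    have := s.2
    have h3 : (s : R) * (a * a) = (s : R) * (a * s) := by ring_nf; ring_nf at h2; linear_combination h2
    exact mul_cancel_left_mem_nonZeroDivisors s.2 |>.mp h3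
  set b : R := (s : R) - a with hb
  have hab : a * b = 0 := by rw [hb]; linear_combination -key
  -- a ∈ (a) ⊓ ((s) ⊔ (b))
  have hmem : a ∈ Ideal.span {a} ⊓ (Ideal.span {(s : R)} ⊔ Ideal.span {b}) := by
    constructor
    · exact Ideal.subset_span rfl
    · have : a = (s : R) - b := by simp [hb]
      rw [this]
      exact sub_mem (Ideal.mem_sup_left (Ideal.subset_span rfl))
        (Ideal.mem_sup_right (Ideal.subset_span rfl))
  rw [harith] at hmem
  obtain ⟨u, hu, v, hv, huv⟩ := Submodule.mem_sup.mp hmem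
  obtain ⟨hu1, hu2⟩ := hu
  obtain ⟨hv1, hv2⟩ := hv
  obtain ⟨t, ht⟩ := Ideal.mem_span_singleton'.mp hu2
  obtain ⟨x, hx⟩ := Ideal.mem_span_singleton'.mp hv1
  obtain ⟨y, hy⟩ := Ideal.mem_span_singleton'.mp hv2
  -- v * s = 0, hence v = 0
  have hvs : v * (s : R) = 0 := by
    linear_combination (-b) * hx + (-a) * hy + (x + y) * hab - v * hb
  have hv0 : v = 0 := by
    have := (mul_cancel_right_mem_nonZeroDivisors s.2).mp (by rw [hvs, zero_mul] : v * (s:R) = 0 * s)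
    exact this
  have hts : t * (s : R) = a := by rw [ht]; rw [← huv, hv0, add_zero]
  refine ⟨t, ?_⟩
  rw [IsLocalization.eq_mk'_iff_mul_eq, ← map_mul, hts]
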